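/- For the Caldeira-Leggett-type transfer matrix couplings in the self-dual case λ_x = λ_zz = λ and q_x = q_zz = q, defining the edge weights w₀ = e^{J₀(m)} - 1 with e^{J₀(m)} = (1-2q)(1+mλ)/(1-mλ) and w₁ = e^{J₁(m)} - 1 with e^{J₁(m)} = mλ/(q+(1-q)λ²), and t_i = (1 - 2e^{J_i} + e^{2J_i+K_i})/(e^{J_i}-1)² where e^{2J₀+K₀} satisfies 1-2e^{J₀}+e^{2J₀+K₀} = 4(q+(1-q)λ²)/(1-mλ)² and 1-2e^{J₁}+e^{2J₁+K₁} = (1-mλ)²/(q+(1-q)λ²), then the self-duality conditions hold: w₀·w₁·t₁ = 2 and t₀ = t₁. -/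

import Mathlib

/-- Kramers–Wannier self-duality conditions for the disordered Ashkin–Teller weights in
the self-dual case `λ_x = λ_zz = λ`, `q_x = q_zz = q`: with the stated edge weights,
`w₀ w₁ t₁ = 2` and `t₀ = t₁`. -/
theorem self_duality_conditions
    (lam q m : ℝ) (hlam : lam ∈ Set.Ioo (0 : ℝ) 1) (hq : q ∈ Set.Ico (0 : ℝ) (1 / 2))
    (hm : m = 1 ∨ m = -1)
    (hpos : 0 < q + (1 - q) * lam ^ 2) (hne : 1 - m * lam ≠ 0)
    (eJ0 eJ1 E0 E1 w0 w1 t0 t1 : ℝ)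
    (heJ0 : eJ0 = (1 - 2 * q) * (1 + m * lam) / (1 - m * lam))
    (heJ1 : eJ1 = m * lam / (q + (1 - q) * lam ^ 2))
    (hw0 : w0 = eJ0 - 1) (hw1 : w1 = eJ1 - 1)
    (hw0ne : w0 ≠ 0) (hw1ne : w1 ≠ 0)
    (hE0 : 1 - 2 * eJ0 + E0 = 4 * (q + (1 - q) * lam ^ 2) / (1 - m * lam) ^ 2)
    (hE1 : 1 - 2 * eJ1 + E1 = (1 - m * lam) ^ 2 / (q + (1 - q) * lam ^ 2))
    (ht0 : t0 = (1 - 2 * eJ0 + E0) / w0 ^ 2)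
    (ht1 : t1 = (1 - 2 * eJ1 + E1) / w1 ^ 2) :
    w0 * w1 * t1 = 2 ∧ t0 = t1 := by
  have hQ : q + (1 - q) * lam ^ 2 ≠ 0 := ne_of_gt hpos
  have hm2 : m ^ 2 = 1 := by rcases hm with rfl | rfl <;> norm_num
  have hw0' : w0 * (1 - m * lam) = (1 - 2 * q) * (1 + m * lam) - (1 - m * lam) := by
    rw [hw0, heJ0]; field_simp
  have hw1' : w1 * (q + (1 - q) * lam ^ 2) = m * lam - (q + (1 - q) * lam ^ 2) := by
    rw [hw1, heJ1, sub_mul, div_mul_cancel₀ _ hQ, one_mul]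
  have key : w0 * (1 - m * lam) ^ 2 = 2 * (q + (1 - q) * lam ^ 2) * w1 := by
    apply mul_right_cancel₀ hQ
    linear_combination ((1 - m * lam) * (q + (1 - q) * lam ^ 2)) * hw0'
      + (-2 * (q + (1 - q) * lam ^ 2)) * hw1'
      + (-2 * lam ^ 2 * (1 - q) * (q + (1 - q) * lam ^ 2)) * hm2
  rw [hE0] at ht0
  rw [hE1] at ht1
  constructor
  · apply mul_right_cancel₀ (mul_ne_zero hQ hw1ne)
    have lhs_eq : w0 * w1 * t1 * ((q + (1 - q) * lam ^ 2) * w1)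
        = w0 * (1 - m * lam) ^ 2 := by
      rw [ht1]; field_simp; exact div_self (by convert hQ using 2; ring)
    rw [lhs_eq, key]; ring
  · apply mul_right_cancel₀ (mul_ne_zero (mul_ne_zero (mul_ne_zero
      (pow_ne_zero 2 hne) hQ) (pow_ne_zero 2 hw0ne)) (pow_ne_zero 2 hw1ne))
    have l0 : t0 * ((1 - m * lam) ^ 2 * (q + (1 - q) * lam ^ 2) * w0 ^ 2 * w1 ^ 2)
        = 4 * (q + (1 - q) * lam ^ 2) ^ 2 * w1 ^ 2 := by
      rw [ht0]; field_simp; exact div_self (by convert hne using 2; ring)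
    have l1 : t1 * ((1 - m * lam) ^ 2 * (q + (1 - q) * lam ^ 2) * w0 ^ 2 * w1 ^ 2)
        = (1 - m * lam) ^ 4 * w0 ^ 2 := by
      rw [ht1]; field_simp; exact div_self (by convert hQ using 2; ring)
    rw [l0, l1]
    linear_combination (-(w0 * (1 - m * lam) ^ 2) - 2 * (q + (1 - q) * lam ^ 2) * w1) * key
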